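/- For any undirected graph G, the induced matching number of the bipartite double cover with loops added, B_e[G] = G ×_e K_2, is at least the independence number of G: α(G) ≤ im(G ×_e K_2). -/

import Mathlib

open SimpleGraph

def tensor {α β : Type*} (G : SimpleGraph α) (H : SimpleGraph β) :
    SimpleGraph (α × β) where
  Adj p q := G.Adj p.1 q.1 ∧ H.Adj p.2 q.2
  symm := ⟨fun p q h => ⟨h.1.symm, h.2.symm⟩⟩
  loopless := ⟨fun p h => G.loopless.irrefl p.1 h.1⟩

def etensor {α β : Type*} (G : SimpleGraph α) (H : SimpleGraph β) :
    SimpleGraph (α × β) where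
  Adj p q := (G.Adj p.1 q.1 ∨ p.1 = q.1) ∧ H.Adj p.2 q.2
  symm := ⟨fun p q h => ⟨h.1.imp (fun h' => h'.symm) (fun h' => h'.symm), h.2.symm⟩⟩
  loopless := ⟨fun p h => H.loopless.irrefl p.2 h.2⟩

def disj {α β : Type*} (G : SimpleGraph α) (H : SimpleGraph β) :
    SimpleGraph (α × β) where
  Adj p q := G.Adj p.1 q.1 ∨ H.Adj p.2 q.2
  symm := ⟨fun p q h => h.imp (fun h' => h'.symm) (fun h' => h'.symm)⟩
  loopless := ⟨fun p h => h.elim (G.loopless.irrefl p.1) (H.loopless.irrefl p.2)⟩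

def lexProd {α β : Type*} (G : SimpleGraph α) (H : SimpleGraph β) :
    SimpleGraph (α × β) where
  Adj p q := G.Adj p.1 q.1 ∨ (p.1 = q.1 ∧ H.Adj p.2 q.2)
  symm := ⟨fun p q h => h.imp (fun h' => h'.symm) (fun h' => ⟨h'.1.symm, h'.2.symm⟩)⟩
  loopless := ⟨fun p h => h.elim (G.loopless.irrefl p.1) (fun h' => H.loopless.irrefl p.2 h'.2)⟩

def disjPow {α : Type*} (G : SimpleGraph α) (k : ℕ) : SimpleGraph (Fin k → α) where
  Adj x y := ∃ i, G.Adj (x i) (y i)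
  symm := ⟨fun x y h => h.imp (fun i hi => hi.symm)⟩
  loopless := ⟨fun x h => h.elim (fun i hi => G.loopless.irrefl (x i) hi)⟩

def lexPow {α : Type*} (G : SimpleGraph α) (k : ℕ) : SimpleGraph (Fin k → α) where
  Adj x y := ∃ i, G.Adj (x i) (y i) ∧ ∀ j, j < i → x j = y j
  symm := ⟨fun x y h => h.imp (fun i hi => ⟨hi.1.symm, fun j hj => (hi.2 j hj).symm⟩)⟩
  loopless := ⟨fun x h => h.elim (fun i hi => G.loopless.irrefl (x i) hi.1)⟩

def IsIndMatching {V : Type*} (G : SimpleGraph V) {n : ℕ} (a b : Fin n → V) : Prop :=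
  (∀ i, G.Adj (a i) (b i)) ∧
  ∀ i j, i ≠ j → ¬ G.Adj (a i) (a j) ∧ ¬ G.Adj (a i) (b j) ∧ ¬ G.Adj (b i) (b j)

noncomputable def imNum {V : Type*} (G : SimpleGraph V) : ℕ :=
  sSup {n | ∃ a b : Fin n → V, IsIndMatching G a b}

def SemiCond {V : Type*} (G : SimpleGraph V) (σ : V → ℕ) (u u' v v' : V) : Prop :=
  σ u < σ u' → σ u < σ v → σ v < σ v' → ¬ G.Adj u v ∧ ¬ G.Adj u v'

def IsSemiIndMatching {V : Type*} (G : SimpleGraph V) (σ : V → ℕ) {n : ℕ}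
    (a b : Fin n → V) : Prop :=
  (∀ i, G.Adj (a i) (b i)) ∧
  (∀ i j, i ≠ j → a i ≠ a j ∧ a i ≠ b j ∧ b i ≠ b j) ∧
  (∀ i j, i ≠ j →
    SemiCond G σ (a i) (b i) (a j) (b j) ∧ SemiCond G σ (a i) (b i) (b j) (a j) ∧
    SemiCond G σ (b i) (a i) (a j) (b j) ∧ SemiCond G σ (b i) (a i) (b j) (a j))

noncomputable def simNumOrd {V : Type*} (G : SimpleGraph V) (σ : V → ℕ) : ℕ :=
  sSup {n | ∃ a b : Fin n → V, IsSemiIndMatching G σ a b}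

noncomputable def simNum {V : Type*} (G : SimpleGraph V) : ℕ :=
  sSup {n | ∃ σ : V → ℕ, Function.Injective σ ∧
    ∃ a b : Fin n → V, IsSemiIndMatching G σ a b}

noncomputable def indepNum {V : Type*} (G : SimpleGraph V) : ℕ :=
  sSup {n | ∃ s : Finset V, s.card = n ∧ ∀ u ∈ s, ∀ v ∈ s, ¬ G.Adj u v}

noncomputable def chromNum {V : Type*} (G : SimpleGraph V) : ℕ :=
  sInf {n | G.Colorable n}

def vecLT {d : ℕ} (x y : Fin d → ℝ) : Prop := (∀ i, x i ≤ y i) ∧ ∃ i, x i < y i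

def Realizes {V : Type*} (R : V → V → Prop) {d : ℕ} (φ : V → Fin d → ℝ) : Prop :=
  ∀ u v, u ≠ v → (R u v ↔ vecLT (φ u) (φ v))

noncomputable def posetDim {V : Type*} (R : V → V → Prop) : ℕ :=
  sInf {d | ∃ φ : V → Fin d → ℝ, Realizes R φ}

def IsHeightTwoPoset {V : Type*} (R : V → V → Prop) : Prop :=
  (∀ u, ¬ Relation.TransGen R u u) ∧
  (∀ u v w, R u v → R v w → R u w) ∧
  (∀ u, (∀ v, ¬ R v u) ∨ (∀ v, ¬ R u v))

def etensorRel {α β : Type*} (G : SimpleGraph α) (R : β → β → Prop) :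
    α × β → α × β → Prop :=
  fun p q => (G.Adj p.1 q.1 ∨ p.1 = q.1) ∧ R p.2 q.2

def tensorRel {α β : Type*} (G : SimpleGraph α) (R : β → β → Prop) :
    α × β → α × β → Prop :=
  fun p q => G.Adj p.1 q.1 ∧ R p.2 q.2

def K2dir : Fin 2 → Fin 2 → Prop := fun i j => i = 0 ∧ j = 1


lemma indMatching_fst_inj {V : Type*} (G : SimpleGraph V) {n : ℕ} {a b : Fin n → V}
    (h : IsIndMatching G a b) : Function.Injective a := by
  intro i j hij
  by_contra hne
  have h1 := (h.2 i j hne).2.1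
  have h2 := h.1 j
  rw [← hij] at h2
  exact h1 h2

lemma imNum_bdd {V : Type*} [Fintype V] (G : SimpleGraph V) :
    BddAbove {n | ∃ a b : Fin n → V, IsIndMatching G a b} := by
  refine ⟨Fintype.card V, fun n hn => ?_⟩
  obtain ⟨a, b, h⟩ := hn
  simpa using Fintype.card_le_of_injective a (indMatching_fst_inj G h)

theorem stmt3 {V : Type*} [Fintype V] (G : SimpleGraph V) :
    _root_.indepNum G ≤ imNum (etensor G (⊤ : SimpleGraph (Fin 2))) := by
  classical
  set S : Set ℕ := {n | ∃ s : Finset V, s.card = n ∧ ∀ u ∈ s, ∀ v ∈ s, ¬ G.Adj u v} with hS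
  have h0 : 0 ∈ S := ⟨∅, by simp⟩
  have hbdd : BddAbove S := ⟨Fintype.card V, fun n hn => by
    obtain ⟨s, hs, _⟩ := hn; exact hs ▸ s.card_le_univ⟩
  have hmem : _root_.indepNum G ∈ S := Nat.sSup_mem ⟨0, h0⟩ hbdd
  obtain ⟨s, hcard, hind⟩ := hmem
  set f : Fin (_root_.indepNum G) → V := fun i => s.equivFin.symm (Fin.cast hcard.symm i) with hf
  have hfs : ∀ i, f i ∈ s := fun i => (s.equivFin.symm _).2
  have hfinj : Function.Injective f := by
    intro i j hij
    have := s.equivFin.symm.injective (Subtype.ext hij)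
    exact Fin.cast_injective _ (by injection this)
  have hmatch : IsIndMatching (etensor G (⊤ : SimpleGraph (Fin 2)))
      (fun i => (f i, 0)) (fun i => (f i, 1)) := by
    constructor
    · intro i
      exact ⟨Or.inr rfl, (by simp : ((0:Fin 2),(1:Fin 2)).1 ≠ ((0:Fin 2),(1:Fin 2)).2)⟩
    · intro i j hij
      have hne : f i ≠ f j := fun h => hij (hfinj h)
      have hadj : ¬ G.Adj (f i) (f j) := hind _ (hfs i) _ (hfs j)
      have hadj' : ¬ G.Adj (f j) (f i) := hind _ (hfs j) _ (hfs i)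
      refine ⟨fun h => h.2 rfl, fun h => ?_, fun h => h.2 rfl⟩
      exact h.1.elim hadj hne
  have : _root_.indepNum G ∈ {n | ∃ a b : Fin n → V × Fin 2,
      IsIndMatching (etensor G (⊤ : SimpleGraph (Fin 2))) a b} := ⟨_, _, hmatch⟩
  exact le_csSup (imNum_bdd _) this
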